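/- The Chen–Ruan-type product on the span of box/lattice generators is associative: let Σ be a simplicial fan in N_ℝ and define on the free ℂ-module ⊕_{k ∈ N ∩ |Σ|} ℂ φ_k the product φ_{k₁} · φ_{k₂} = φ_{k₁+k₂} if k̄₁ and k̄₂ lie in a common cone of Σ, and 0 otherwise. Then this product is commutative and associative. -/

import Mathlib

open scoped BigOperators

/-- Combinatorial data of a (stacky) fan: a finitely generated abelian group `N` with
its realification map `bar : N → N_ℝ = V`, ray generators `b₁,…,b_m ∈ N`, and a finite
collection of cones, each identified (as in the paper) with the subset of
`{1,…,m}` indexing its rays. -/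
structure FanData (N V : Type*) [AddCommGroup N] [AddCommGroup V] [Module ℝ V]
    (m : ℕ) where
  bar : N →+ V
  b : Fin m → N
  cones : Finset (Finset (Fin m))

namespace FanData

variable {N V : Type*} [AddCommGroup N] [AddCommGroup V] [Module ℝ V] {m : ℕ}
variable (F : FanData N V m)

/-- The cone of `V` spanned by the rays indexed by `σ`. -/
def coneSet (σ : Finset (Fin m)) : Set V :=
  {x | ∃ c : Fin m → ℝ, (∀ i, 0 ≤ c i) ∧ (∀ i, i ∉ σ → c i = 0) ∧
      x = ∑ i, c i • F.bar (F.b i)}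

/-- The support `|Σ|` of the fan. -/
def support : Set V := ⋃ σ ∈ F.cones, F.coneSet σ

/-- The set `N ∩ |Σ|` of lattice points of the support. -/
def latticePts : Set N := {k | F.bar k ∈ F.support}

/-- Simpliciality: the rays of each cone are linearly independent. -/
def Simplicial : Prop :=
  ∀ σ ∈ F.cones, LinearIndependent ℝ (fun i : σ => F.bar (F.b (i : Fin m)))

/-- The collection of cones is closed under passing to faces. -/
def FacesClosed : Prop := ∀ σ ∈ F.cones, ∀ τ, τ ⊆ σ → τ ∈ F.cones

/-- Two cones of the fan meet along a common face. -/
def MeetsInFaces : Prop :=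
  ∀ σ ∈ F.cones, ∀ τ ∈ F.cones, ∀ x ∈ F.coneSet σ, x ∈ F.coneSet τ →
    x ∈ F.coneSet (σ ∩ τ)

/-- `Ψ : N ∩ |Σ| → (ℚ_{≥0})^m` records the (unique, by simpliciality) nonnegative
barycentric coordinates of `k̄` on the rays of its minimal cone: `Ψ(k) ≥ 0`,
`k̄ = Σᵢ Ψᵢ(k) b̄ᵢ`, and the support of `Ψ(k)` is contained in every cone
containing `k̄` (Notation 2.2 of the paper). -/
def IsPsi (Ψ : N → Fin m → ℚ) : Prop :=
  ∀ k ∈ F.latticePts,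
    (∀ i, 0 ≤ Ψ k i) ∧
    (F.bar k = ∑ i, (Ψ k i : ℝ) • F.bar (F.b i)) ∧
    (∀ σ ∈ F.cones, F.bar k ∈ F.coneSet σ → ∀ i, Ψ k i ≠ 0 → i ∈ σ)

/-- The subgroup `𝕆 = Σ_{k ∈ N ∩ |Σ|} ℤ·(Ψ(k), k) ⊆ ℚ^m ⊕ N`. -/
def OO (Ψ : N → Fin m → ℚ) : AddSubgroup ((Fin m → ℚ) × N) :=
  AddSubgroup.closure {p | ∃ k ∈ F.latticePts, p = (Ψ k, k)}

/-- The lattice `Λ = {(λ, 0) ∈ 𝕆} ⊆ ℚ^m` of the refined fan sequence. -/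
def Lam (Ψ : N → Fin m → ℚ) : AddSubgroup (Fin m → ℚ) :=
  (F.OO Ψ).comap (AddMonoidHom.inl (Fin m → ℚ) N)

end FanData

open Classical in
/-- The Chen–Ruan-type product on `⊕_{k ∈ N ∩ |Σ|} ℂ φ_k`:
`φ_{k₁} · φ_{k₂} = φ_{k₁+k₂}` if `k̄₁, k̄₂` lie in a common cone of `Σ`, and `0`
otherwise (extended bilinearly to finitely supported functions). -/
noncomputable def FanData.crMul
    {N V : Type*} [AddCommGroup N] [AddCommGroup V] [Module ℝ V] {m : ℕ}
    (F : FanData N V m) (f g : N →₀ ℂ) : N →₀ ℂ :=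
  f.sum fun k a => g.sum fun l b =>
    if ∃ σ ∈ F.cones, F.bar k ∈ F.coneSet σ ∧ F.bar l ∈ F.coneSet σ
    then Finsupp.single (k + l) (a * b) else 0

namespace FanData

variable {N V : Type*} [AddCommGroup N] [AddCommGroup V] [Module ℝ V] {m : ℕ}
variable (F : FanData N V m)

lemma coneSet_mono {σ τ : Finset (Fin m)} (h : σ ⊆ τ) : F.coneSet σ ⊆ F.coneSet τ := by
  rintro x ⟨c, h0, hs, rfl⟩
  exact ⟨c, h0, fun i hi => hs i (fun h' => hi (h h')), rfl⟩

lemma add_mem_coneSet {σ : Finset (Fin m)} {x y : V}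
    (hx : x ∈ F.coneSet σ) (hy : y ∈ F.coneSet σ) : x + y ∈ F.coneSet σ := by
  obtain ⟨c, hc0, hcs, rfl⟩ := hx
  obtain ⟨d, hd0, hds, rfl⟩ := hy
  refine ⟨fun i => c i + d i, fun i => add_nonneg (hc0 i) (hd0 i),
    fun i hi => by simp only []; rw [hcs i hi, hds i hi, add_zero], ?_⟩
  rw [← Finset.sum_add_distrib]
  simp [add_smul]

/-- the combinatorial heart of associativity -/
lemma crKey (hsimp : F.Simplicial) (hmeet : F.MeetsInFaces) {k₁ k₂ k₃ : N}
    (h12 : ∃ σ ∈ F.cones, F.bar k₁ ∈ F.coneSet σ ∧ F.bar k₂ ∈ F.coneSet σ)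
    (h123 : ∃ τ ∈ F.cones, F.bar (k₁ + k₂) ∈ F.coneSet τ ∧ F.bar k₃ ∈ F.coneSet τ) :
    (∃ σ ∈ F.cones, F.bar k₂ ∈ F.coneSet σ ∧ F.bar k₃ ∈ F.coneSet σ) ∧
    (∃ σ ∈ F.cones, F.bar k₁ ∈ F.coneSet σ ∧ F.bar (k₂ + k₃) ∈ F.coneSet σ) := by
  obtain ⟨σ, hσ, h1σ, h2σ⟩ := h12
  obtain ⟨τ, hτ, h12τ, h3τ⟩ := h123
  have hsum : F.bar (k₁ + k₂) ∈ F.coneSet σ := by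
    rw [map_add]; exact F.add_mem_coneSet h1σ h2σ
  have hστ : F.bar (k₁ + k₂) ∈ F.coneSet (σ ∩ τ) :=
    hmeet σ hσ τ hτ _ hsum h12τ
  -- coordinates
  obtain ⟨c, hc0, hcs, hc⟩ := h1σ
  obtain ⟨d, hd0, hds, hd⟩ := h2σ
  obtain ⟨e, he0, hes, he⟩ := hστ
  -- linear independence forces c i + d i = e i for all i
  have hzero : ∀ i, c i + d i - e i = 0 := by
    have hvan : ∀ i, i ∉ σ → c i + d i - e i = 0 := by
      intro i hi
      rw [hcs i hi, hds i hi, hes i (fun h => hi (Finset.mem_inter.mp h).1)]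
      ring
    have hsumeq : ∑ j, (c j + d j - e j) • F.bar (F.b j) = 0 := by
      simp only [sub_smul, add_smul, Finset.sum_sub_distrib, Finset.sum_add_distrib]
      rw [← hc, ← hd, ← he, map_add, sub_self]
    have hσsum : ∑ j : σ, (c (j : Fin m) + d j - e j) • F.bar (F.b (j : Fin m)) = 0 := by
      rw [Finset.sum_coe_sort σ (fun j => (c j + d j - e j) • F.bar (F.b j)), ← hsumeq]
      refine Finset.sum_subset (Finset.subset_univ σ) ?_
      intro j _ hj
      rw [hvan j hj, zero_smul]
    intro i
    by_cases hiσ : i ∈ σ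
    · exact Fintype.linearIndependent_iff.mp (hsimp σ hσ)
        (fun j : σ => c (j : Fin m) + d j - e j) hσsum ⟨i, hiσ⟩
    · exact hvan i hiσ
  have hck : ∀ i, i ∉ σ ∩ τ → c i = 0 := by
    intro i hi
    by_cases hiσ : i ∈ σ
    · have hiτ : i ∉ τ := fun h => hi (Finset.mem_inter.mpr ⟨hiσ, h⟩)
      have := hzero i
      have he0' : e i = 0 := hes i hi
      have : c i + d i = 0 := by linarith
      linarith [hc0 i, hd0 i]
    · exact hcs i hiσ
  have hdk : ∀ i, i ∉ σ ∩ τ → d i = 0 := by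
    intro i hi
    by_cases hiσ : i ∈ σ
    · have hiτ : i ∉ τ := fun h => hi (Finset.mem_inter.mpr ⟨hiσ, h⟩)
      have := hzero i
      have he0' : e i = 0 := hes i hi
      have : c i + d i = 0 := by linarith
      linarith [hc0 i, hd0 i]
    · exact hds i hiσ
  have h1τ : F.bar k₁ ∈ F.coneSet τ :=
    F.coneSet_mono Finset.inter_subset_right ⟨c, hc0, hck, hc⟩
  have h2τ : F.bar k₂ ∈ F.coneSet τ :=
    F.coneSet_mono Finset.inter_subset_right ⟨d, hd0, hdk, hd⟩
  refine ⟨⟨τ, hτ, h2τ, h3τ⟩, ⟨τ, hτ, h1τ, ?_⟩⟩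
  rw [map_add]; exact F.add_mem_coneSet h2τ h3τ


lemma crRel_symm {k l : N}
    (h : ∃ σ ∈ F.cones, F.bar k ∈ F.coneSet σ ∧ F.bar l ∈ F.coneSet σ) :
    ∃ σ ∈ F.cones, F.bar l ∈ F.coneSet σ ∧ F.bar k ∈ F.coneSet σ := by
  obtain ⟨σ, h1, h2, h3⟩ := h; exact ⟨σ, h1, h3, h2⟩

lemma crMul_zero_left (g : N →₀ ℂ) : F.crMul 0 g = 0 := by
  unfold crMul; exact Finsupp.sum_zero_index

lemma crMul_zero_right (f : N →₀ ℂ) : F.crMul f 0 = 0 := by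
  unfold crMul
  simp only [Finsupp.sum_zero_index]
  exact Finset.sum_const_zero

open Classical in
lemma crMul_single_single (k l : N) (a b : ℂ) :
    F.crMul (Finsupp.single k a) (Finsupp.single l b) =
    if ∃ σ ∈ F.cones, F.bar k ∈ F.coneSet σ ∧ F.bar l ∈ F.coneSet σ
    then Finsupp.single (k + l) (a * b) else 0 := by
  have inner0 : ((Finsupp.single l b).sum fun l' b' =>
      if ∃ σ ∈ F.cones, F.bar k ∈ F.coneSet σ ∧ F.bar l' ∈ F.coneSet σ
      then Finsupp.single (k + l') ((0:ℂ) * b') else 0) = 0 := by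
    refine Finsupp.sum_single_index ?_ |>.trans ?_ <;> split <;> simp
  unfold crMul
  rw [Finsupp.sum_single_index inner0, Finsupp.sum_single_index]
  split <;> simp

lemma crMul_add_left (f₁ f₂ g : N →₀ ℂ) :
    F.crMul (f₁ + f₂) g = F.crMul f₁ g + F.crMul f₂ g := by
  classical
  unfold crMul
  refine Finsupp.sum_add_index' (fun k => ?_) (fun k a₁ a₂ => ?_)
  · simp
  · rw [← Finsupp.sum_add]
    apply Finsupp.sum_congr
    intro l _
    split <;> simp [add_mul, Finsupp.single_add]

lemma crMul_add_right (f g₁ g₂ : N →₀ ℂ) :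
    F.crMul f (g₁ + g₂) = F.crMul f g₁ + F.crMul f g₂ := by
  classical
  unfold crMul
  rw [← Finsupp.sum_add]
  apply Finsupp.sum_congr
  intro k _
  refine Finsupp.sum_add_index' (fun l => ?_) (fun l b₁ b₂ => ?_)
  · split <;> simp
  · split <;> simp [mul_add, Finsupp.single_add]

lemma crMul_comm (f g : N →₀ ℂ) : F.crMul f g = F.crMul g f := by
  induction f using Finsupp.induction_linear with
  | zero => simp only [crMul_zero_left, crMul_zero_right]
  | add f₁ f₂ ih₁ ih₂ => simp only [crMul_add_left, crMul_add_right, ih₁, ih₂]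
  | single k a =>
    induction g using Finsupp.induction_linear with
    | zero => simp only [crMul_zero_left, crMul_zero_right]
    | add g₁ g₂ ih₁ ih₂ => simp only [crMul_add_left, crMul_add_right, ih₁, ih₂]
    | single l b =>
      rw [crMul_single_single, crMul_single_single]
      by_cases h : ∃ σ ∈ F.cones, F.bar k ∈ F.coneSet σ ∧ F.bar l ∈ F.coneSet σ
      · rw [if_pos h, if_pos (F.crRel_symm h), add_comm k l, mul_comm a b]
      · rw [if_neg h, if_neg (fun h' => h (F.crRel_symm h'))]

lemma crMul_assoc (hsimp : F.Simplicial) (hmeet : F.MeetsInFaces) (f g h : N →₀ ℂ) :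
    F.crMul (F.crMul f g) h = F.crMul f (F.crMul g h) := by
  induction f using Finsupp.induction_linear with
  | zero => simp only [crMul_zero_left]
  | add f₁ f₂ ih₁ ih₂ => simp only [crMul_add_left, ih₁, ih₂]
  | single k₁ a =>
    induction g using Finsupp.induction_linear with
    | zero => simp only [crMul_zero_left, crMul_zero_right]
    | add g₁ g₂ ih₁ ih₂ =>
        simp only [crMul_add_left, crMul_add_right, ih₁, ih₂]
    | single k₂ b =>
      induction h using Finsupp.induction_linear with
      | zero => simp only [crMul_zero_right]
      | add h₁ h₂ ih₁ ih₂ => simp only [crMul_add_right, ih₁, ih₂]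
      | single k₃ c =>
        rw [crMul_single_single, crMul_single_single]
        by_cases h12 : ∃ σ ∈ F.cones, F.bar k₁ ∈ F.coneSet σ ∧ F.bar k₂ ∈ F.coneSet σ
        · rw [if_pos h12]
          by_cases h23 : ∃ σ ∈ F.cones, F.bar k₂ ∈ F.coneSet σ ∧ F.bar k₃ ∈ F.coneSet σ
          · rw [if_pos h23, crMul_single_single, crMul_single_single]
            by_cases h123 : ∃ σ ∈ F.cones, F.bar (k₁ + k₂) ∈ F.coneSet σ ∧ F.bar k₃ ∈ F.coneSet σ
            · obtain ⟨-, h1_23⟩ := F.crKey hsimp hmeet h12 h123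
              rw [if_pos h123, if_pos h1_23, add_assoc, mul_assoc]
            · rw [if_neg h123]
              by_cases h1_23 : ∃ σ ∈ F.cones, F.bar k₁ ∈ F.coneSet σ ∧ F.bar (k₂ + k₃) ∈ F.coneSet σ
              · exfalso
                have h32 := F.crRel_symm h23
                have h32_1 : ∃ σ ∈ F.cones, F.bar (k₃ + k₂) ∈ F.coneSet σ ∧ F.bar k₁ ∈ F.coneSet σ := by
                  rw [add_comm k₃ k₂]; exact F.crRel_symm h1_23
                obtain ⟨-, h3_21⟩ := F.crKey hsimp hmeet h32 h32_1
                apply h123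
                rw [add_comm k₁ k₂]
                exact F.crRel_symm h3_21
              · rw [if_neg h1_23]
          · rw [if_neg h23, crMul_zero_right, crMul_single_single]
            by_cases h123 : ∃ σ ∈ F.cones, F.bar (k₁ + k₂) ∈ F.coneSet σ ∧ F.bar k₃ ∈ F.coneSet σ
            · exact absurd (F.crKey hsimp hmeet h12 h123).1 h23
            · rw [if_neg h123]
        · rw [if_neg h12, crMul_zero_left]
          by_cases h23 : ∃ σ ∈ F.cones, F.bar k₂ ∈ F.coneSet σ ∧ F.bar k₃ ∈ F.coneSet σ
          · rw [if_pos h23, crMul_single_single]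
            by_cases h1_23 : ∃ σ ∈ F.cones, F.bar k₁ ∈ F.coneSet σ ∧ F.bar (k₂ + k₃) ∈ F.coneSet σ
            · exfalso
              have h32 := F.crRel_symm h23
              have h32_1 : ∃ σ ∈ F.cones, F.bar (k₃ + k₂) ∈ F.coneSet σ ∧ F.bar k₁ ∈ F.coneSet σ := by
                rw [add_comm k₃ k₂]; exact F.crRel_symm h1_23
              obtain ⟨h21, -⟩ := F.crKey hsimp hmeet h32 h32_1
              exact h12 (F.crRel_symm h21)
            · rw [if_neg h1_23]
          · rw [if_neg h23, crMul_zero_right]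


end FanData

/-- The Chen–Ruan-type product on the span of the lattice generators of a simplicial
fan with convex support is commutative and associative. -/
theorem FanData.crMul_comm_assoc
    {N V : Type*} [AddCommGroup N] [AddCommGroup V] [Module ℝ V] {m : ℕ}
    (F : FanData N V m) (hsimp : F.Simplicial) (hfaces : F.FacesClosed)
    (hmeet : F.MeetsInFaces) (hconv : Convex ℝ F.support) :
    (∀ f g : N →₀ ℂ, F.crMul f g = F.crMul g f) ∧
    (∀ f g h : N →₀ ℂ, F.crMul (F.crMul f g) h = F.crMul f (F.crMul g h)) := by
  exact ⟨fun f g => F.crMul_comm f g, fun f g h => F.crMul_assoc hsimp hmeet f g h⟩
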